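/- arXiv:1707.01157 — 3 statements merged into one kernel-verified Lean document; each statement's English description precedes it below -/
import Mathlib

section
/- For every k ≥ 1 and every net N in HSA(IR) having at most k transitions with at least one reset pre-arc, there exist a net N' in HSA(IR) having at most k − 1 transitions with at least one reset pre-arc, and a map f from markings of N to markings of N', such that: (i) for all markings M₁, M₂ of N, if M₂ is reachable from M₁ in N then f(M₂) is reachable from f(M₁) in N'; and (ii) for all markings M₁, M₂ of N, if f(M₂) is reachable from f(M₁) in N' then M₂ is reachable from M₁ in N. -/
/-- An arc from a place to a transition: an ordinary weighted arc, an
inhibitor arc, a reset arc, or a transfer arc to the place `p'`. -/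
inductive Arc (P : Type) where
  | weight : ℕ → Arc P
  | inhibitor : Arc P
  | reset : Arc P
  | transfer : P → Arc P
  deriving DecidableEq

namespace Arc

/-- Whether the arc is an ordinary weighted arc, i.e. `F(p,t) ∈ ℕ`. -/
def isNat {P : Type} : Arc P → Bool
  | weight _ => true
  | _ => false

end Arc

/-- A Petri net with special arcs: places `Fin np`, transitions `Fin nt`,
pre-arcs (possibly special), post-arcs (ordinary) and an initial marking. -/
structure SNet where
  np : ℕ
  nt : ℕ
  pre : Fin np → Fin nt → Arc (Fin np)
  post : Fin nt → Fin np → ℕ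
  init : Fin np → ℕ

namespace SNet

/-- A marking assigns a number of tokens to each place. -/
abbrev Marking (N : SNet) := Fin N.np → ℕ

/-- A transition `t` is firable at `M` if `M p ≥ F(p,t)` for ordinary
pre-arcs and `M p = 0` for inhibitor pre-arcs. -/
def Firable (N : SNet) (M : N.Marking) (t : Fin N.nt) : Prop :=
  ∀ p, match N.pre p t with
    | Arc.weight n => n ≤ M p
    | Arc.inhibitor => M p = 0
    | _ => True

/-- The marking obtained by firing `t` at `M`: remove `F(p,t)` tokens for
ordinary arcs, empty reset places, move all tokens of transfer places to
their targets, then add `F(t,p)` tokens everywhere. -/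
def fire (N : SNet) (M : N.Marking) (t : Fin N.nt) : N.Marking := fun p =>
  (match N.pre p t with
    | Arc.weight n => M p - n
    | Arc.inhibitor => M p
    | Arc.reset => 0
    | Arc.transfer _ => 0)
  + (∑ q : Fin N.np, if N.pre q t = Arc.transfer p then M q else 0)
  + N.post t p

/-- `FireSeq N M ts M'` : firing the sequence `ts` from `M` is possible and
leads to `M'`. -/
def FireSeq (N : SNet) : N.Marking → List (Fin N.nt) → N.Marking → Prop
  | M, [], M' => M' = M
  | M, t :: ts, M' => Firable N M t ∧ FireSeq N (fire N M t) ts M'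

/-- `M'` is reachable from `M` by firing some finite sequence of transitions. -/
def Reach (N : SNet) (M M' : N.Marking) : Prop := ∃ ts, FireSeq N M ts M'

/-- The marking after the first `k` firings of the infinite sequence `seq`. -/
def markingAt (N : SNet) (M0 : N.Marking) (seq : ℕ → Fin N.nt) : ℕ → N.Marking
  | 0 => M0
  | k + 1 => fire N (markingAt N M0 seq k) (seq k)

/-- `N` has an infinite run from `M0`. -/
def InfRun (N : SNet) (M0 : N.Marking) : Prop :=
  ∃ seq : ℕ → Fin N.nt, ∀ k, N.Firable (N.markingAt M0 seq k) (seq k)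

/-- A marking is deadlocked if no transition is firable at it. -/
def Deadlocked (N : SNet) (M : N.Marking) : Prop := ∀ t, ¬ N.Firable M t

/-- All special arcs respect the hierarchy `le`:
`F(p,t) ∉ ℕ` and `q ⊑ p` imply `F(q,t) ∉ ℕ`. -/
def RespectsHierarchy (N : SNet) (le : Fin N.np → Fin N.np → Prop) : Prop :=
  ∀ p t, (N.pre p t).isNat = false → ∀ q, le q p → (N.pre q t).isNat = false

/-- The inhibitor arcs respect the hierarchy `le`:
`F(p,t) = I` and `q ⊑ p` imply `F(q,t) ∉ ℕ`. -/
def InhRespectsHierarchy (N : SNet) (le : Fin N.np → Fin N.np → Prop) : Prop :=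
  ∀ p t, N.pre p t = Arc.inhibitor → ∀ q, le q p → (N.pre q t).isNat = false

def NoTransfer (N : SNet) : Prop := ∀ p t p', N.pre p t ≠ Arc.transfer p'

def NoReset (N : SNet) : Prop := ∀ p t, N.pre p t ≠ Arc.reset

def NoInhibitor (N : SNet) : Prop := ∀ p t, N.pre p t ≠ Arc.inhibitor

/-- `Index(p)` : the number of places `q` with `q ⊑ p`. -/
noncomputable def placeIndex (N : SNet) (le : Fin N.np → Fin N.np → Prop)
    (p : Fin N.np) : ℕ :=
  Nat.card {q : Fin N.np // le q p}

/-- `Index(t)` : the maximum `Index(p)` over the inhibitor pre-places `p`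
of `t` (0 if there are none). -/
noncomputable def transIndex (N : SNet) (le : Fin N.np → Fin N.np → Prop)
    (t : Fin N.nt) : ℕ :=
  (Finset.univ.filter (fun p => N.pre p t = Arc.inhibitor)).sup (N.placeIndex le)

/-- `Compat_i(M₁, M₂)` : `M₁` and `M₂` agree on all places of index at most `i`. -/
def Compat (N : SNet) (le : Fin N.np → Fin N.np → Prop) (i : ℕ)
    (M₁ M₂ : N.Marking) : Prop :=
  ∀ p, N.placeIndex le p ≤ i → M₁ p = M₂ p

/-- The maximum `Index` of the transitions occurring in the run `ρ`. -/
noncomputable def runMaxIndex (N : SNet) (le : Fin N.np → Fin N.np → Prop)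
    (ρ : List (Fin N.nt)) : ℕ :=
  (ρ.map (N.transIndex le)).foldr max 0

/-- Membership in HSA(IR): only inhibitor and reset special arcs, all of
which respect some hierarchy. -/
def IsHSA_IR (N : SNet) : Prop :=
  ∃ le : Fin N.np → Fin N.np → Prop, IsLinearOrder (Fin N.np) le ∧
    N.RespectsHierarchy le ∧ N.NoTransfer

/-- Membership in HSA(T): only transfer special arcs, all of which respect
some hierarchy. -/
def IsHSA_T (N : SNet) : Prop :=
  ∃ le : Fin N.np → Fin N.np → Prop, IsLinearOrder (Fin N.np) le ∧
    N.RespectsHierarchy le ∧ N.NoReset ∧ N.NoInhibitor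

/-- Membership in HSA(IT): only inhibitor and transfer special arcs, all of
which respect some hierarchy. -/
def IsHSA_IT (N : SNet) : Prop :=
  ∃ le : Fin N.np → Fin N.np → Prop, IsLinearOrder (Fin N.np) le ∧
    N.RespectsHierarchy le ∧ N.NoReset

/-- Membership in HSA(IRcT): inhibitor, reset and transfer special arcs all
respect some hierarchy, and each transfer arc's target place is connected to
the transition by an ordinary arc. -/
def IsHSA_IRcT (N : SNet) : Prop :=
  ∃ le : Fin N.np → Fin N.np → Prop, IsLinearOrder (Fin N.np) le ∧
    N.RespectsHierarchy le ∧
    (∀ p t p', N.pre p t = Arc.transfer p' → (N.pre p' t).isNat = true)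

/-- The number of transitions having at least one reset pre-arc. -/
def resetTransCount (N : SNet) : ℕ :=
  (Finset.univ.filter (fun t : Fin N.nt => ∃ p, N.pre p t = Arc.reset)).card

/-- The number of transitions having at least one reset or transfer pre-arc. -/
def resetOrTransferTransCount (N : SNet) : ℕ :=
  (Finset.univ.filter (fun t : Fin N.nt =>
    ∃ p, N.pre p t = Arc.reset ∨ ∃ p', N.pre p t = Arc.transfer p')).card

/-- The number of transitions having at least one special (non-ordinary) pre-arc. -/
def specialTransCount (N : SNet) : ℕ :=
  (Finset.univ.filter (fun t : Fin N.nt => ∃ p, (N.pre p t).isNat = false)).card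

/-- The number of reset arcs. -/
def resetArcCount (N : SNet) : ℕ :=
  (Finset.univ.filter
    (fun pt : Fin N.np × Fin N.nt => N.pre pt.1 pt.2 = Arc.reset)).card

/-- The number of inhibitor arcs. -/
def inhibitorArcCount (N : SNet) : ℕ :=
  (Finset.univ.filter
    (fun pt : Fin N.np × Fin N.nt => N.pre pt.1 pt.2 = Arc.inhibitor)).card

/-- The number of transfer arcs. -/
def transferArcCount (N : SNet) : ℕ :=
  (Finset.univ.filter
    (fun pt : Fin N.np × Fin N.nt => ∃ p', N.pre pt.1 pt.2 = Arc.transfer p')).card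

/-- The number of places having at least one inhibitor arc out of them. -/
def inhibitorPlaceCount (N : SNet) : ℕ :=
  (Finset.univ.filter (fun p : Fin N.np => ∃ t, N.pre p t = Arc.inhibitor)).card

end SNet

namespace ResetElim
open SNet

variable {N : SNet}

lemma firable_iff {M : N.Marking} {t : Fin N.nt} : N.Firable M t ↔ ∀ p,
    (∀ n, N.pre p t = Arc.weight n → n ≤ M p) ∧
    (N.pre p t = Arc.inhibitor → M p = 0) := by
  unfold SNet.Firable
  refine forall_congr' fun p => ?_
  cases h : N.pre p t <;> simp

lemma fire_apply (hNT : N.NoTransfer) (M : N.Marking) (t : Fin N.nt) (p : Fin N.np) :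
    N.fire M t p = (match N.pre p t with
      | Arc.weight n => M p - n
      | Arc.inhibitor => M p
      | Arc.reset => 0
      | Arc.transfer _ => 0) + N.post t p := by
  have h0 : (∑ q : Fin N.np, if N.pre q t = Arc.transfer p then M q else 0) = 0 :=
    Finset.sum_eq_zero fun q _ => if_neg (hNT q t p)
  unfold SNet.fire
  rw [h0, add_zero]

lemma fireSeq_nil {M M' : N.Marking} (h : N.FireSeq M [] M') : M' = M := h

lemma fireSeq_append {M M' M'' : N.Marking} {ts ts' : List (Fin N.nt)}
    (h : N.FireSeq M ts M') (h' : N.FireSeq M' ts' M'') :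
    N.FireSeq M (ts ++ ts') M'' := by
  induction ts generalizing M with
  | nil => have : M' = M := h; subst this; exact h'
  | cons t ts ih => exact ⟨h.1, ih h.2⟩

lemma reach_trans {M₁ M₂ M₃ : N.Marking} (h : N.Reach M₁ M₂) (h' : N.Reach M₂ M₃) :
    N.Reach M₁ M₃ := by
  obtain ⟨ts, hts⟩ := h; obtain ⟨ts', hts'⟩ := h'
  exact ⟨ts ++ ts', fireSeq_append hts hts'⟩

section Construction

variable (N : SNet) (t₀ : Fin N.nt)

/-- weight of the ordinary pre-arc of `t₀` at `p` (0 for special arcs). -/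
def w0 (p : Fin N.np) : ℕ := match N.pre p t₀ with | Arc.weight n => n | _ => 0

def emb (p : Fin N.np) : Fin (N.np + 2) := ⟨p.1, by omega⟩
def idleP : Fin (N.np + 2) := ⟨N.np, by omega⟩
def busyP : Fin (N.np + 2) := ⟨N.np + 1, by omega⟩

def mapArc : Arc (Fin N.np) → Arc (Fin (N.np + 2))
  | Arc.weight n => Arc.weight n
  | Arc.inhibitor => Arc.inhibitor
  | Arc.reset => Arc.reset
  | Arc.transfer p => Arc.transfer (emb N p)

lemma mapArc_isNat (a : Arc (Fin N.np)) : (mapArc N a).isNat = a.isNat := by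
  cases a <;> rfl

def embT (t : Fin N.nt) : Fin (N.nt + N.np + 1) := ⟨t.1, by omega⟩
def drainT (p : Fin N.np) : Fin (N.nt + N.np + 1) := ⟨N.nt + p.1, by omega⟩
def endT : Fin (N.nt + N.np + 1) := ⟨N.nt + N.np, by omega⟩

def pre' (p : Fin (N.np + 2)) (t : Fin (N.nt + N.np + 1)) : Arc (Fin (N.np + 2)) :=
  if hp : p.1 < N.np then
    if ht : t.1 < N.nt then
      if (⟨t.1, ht⟩ : Fin N.nt) = t₀ then Arc.weight (w0 N t₀ ⟨p.1, hp⟩)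
      else mapArc N (N.pre ⟨p.1, hp⟩ ⟨t.1, ht⟩)
    else if ht2 : t.1 - N.nt < N.np then
      if N.pre ⟨t.1 - N.nt, ht2⟩ t₀ = Arc.reset ∧ t.1 - N.nt = p.1
        then Arc.weight 1 else Arc.weight 0
    else
      if (N.pre ⟨p.1, hp⟩ t₀).isNat then Arc.weight 0 else Arc.inhibitor
  else if p.1 = N.np then
    if t.1 < N.nt then Arc.weight 1
    else if ht2 : t.1 - N.nt < N.np then
      if N.pre ⟨t.1 - N.nt, ht2⟩ t₀ = Arc.reset then Arc.weight 0 else Arc.weight 1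
    else Arc.weight 0
  else
    if t.1 < N.nt then Arc.weight 0 else Arc.weight 1

def post' (t : Fin (N.nt + N.np + 1)) (p : Fin (N.np + 2)) : ℕ :=
  if ht : t.1 < N.nt then
    if (⟨t.1, ht⟩ : Fin N.nt) = t₀ then
      if p.1 = N.np + 1 then 1 else 0
    else
      if hp : p.1 < N.np then N.post ⟨t.1, ht⟩ ⟨p.1, hp⟩
      else if p.1 = N.np then 1 else 0
  else if t.1 < N.nt + N.np then
    if p.1 = N.np + 1 then 1 else 0
  else
    if hp : p.1 < N.np then N.post t₀ ⟨p.1, hp⟩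
    else if p.1 = N.np then 1 else 0

@[reducible] def N' : SNet where
  np := N.np + 2
  nt := N.nt + N.np + 1
  pre := pre' N t₀
  post := post' N t₀
  init := fun p => if hp : p.1 < N.np then N.init ⟨p.1, hp⟩
    else if p.1 = N.np then 1 else 0

@[simp] lemma N'_np : (N' N t₀).np = N.np + 2 := rfl
@[simp] lemma N'_nt : (N' N t₀).nt = N.nt + N.np + 1 := rfl
@[simp] lemma N'_pre : (N' N t₀).pre = pre' N t₀ := rfl
@[simp] lemma N'_post : (N' N t₀).post = post' N t₀ := rfl

/-- idle-mode marking of `N'` corresponding to `M`. -/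
def fM (M : N.Marking) : (N' N t₀).Marking := fun p =>
  if hp : p.1 < N.np then M ⟨p.1, hp⟩ else if p.1 = N.np then 1 else 0

/-- busy-mode marking of `N'` with old part `X`. -/
def bM (X : N.Marking) : (N' N t₀).Marking := fun p =>
  if hp : p.1 < N.np then X ⟨p.1, hp⟩ else if p.1 = N.np then 0 else 1

@[simp] lemma fM_emb (M : N.Marking) (p : Fin N.np) : fM N t₀ M (emb N p) = M p := by
  simp [fM, emb]
@[simp] lemma fM_idle (M : N.Marking) : fM N t₀ M (idleP N) = 1 := by
  simp [fM, idleP]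
@[simp] lemma fM_busy (M : N.Marking) : fM N t₀ M (busyP N) = 0 := by
  simp [fM, busyP]
@[simp] lemma bM_emb (X : N.Marking) (p : Fin N.np) : bM N t₀ X (emb N p) = X p := by
  simp [bM, emb]
@[simp] lemma bM_idle (X : N.Marking) : bM N t₀ X (idleP N) = 0 := by
  simp [bM, idleP]
@[simp] lemma bM_busy (X : N.Marking) : bM N t₀ X (busyP N) = 1 := by
  simp [bM, busyP]

lemma place_cases (p : Fin (N.np + 2)) :
    (∃ q : Fin N.np, p = emb N q) ∨ p = idleP N ∨ p = busyP N := by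
  rcases lt_trichotomy p.1 N.np with h | h | h
  · exact Or.inl ⟨⟨p.1, h⟩, Fin.ext rfl⟩
  · exact Or.inr (Or.inl (Fin.ext h))
  · refine Or.inr (Or.inr (Fin.ext ?_))
    have := p.2; simp [busyP]; omega

lemma trans_cases (u : Fin (N.nt + N.np + 1)) :
    (∃ t : Fin N.nt, u = embT N t) ∨ (∃ p : Fin N.np, u = drainT N p) ∨ u = endT N := by
  by_cases h : u.1 < N.nt
  · exact Or.inl ⟨⟨u.1, h⟩, Fin.ext rfl⟩
  by_cases h2 : u.1 - N.nt < N.np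
  · refine Or.inr (Or.inl ⟨⟨u.1 - N.nt, h2⟩, Fin.ext ?_⟩)
    simp [drainT]; omega
  · refine Or.inr (Or.inr (Fin.ext ?_))
    have := u.2; simp [endT]; omega

-- pre' evaluation lemmas
lemma pre'_copy (p : Fin N.np) {t : Fin N.nt} (h : t ≠ t₀) :
    pre' N t₀ (emb N p) (embT N t) = mapArc N (N.pre p t) := by
  have hp : (emb N p).1 < N.np := p.2
  have ht : (embT N t).1 < N.nt := t.2
  rw [pre', dif_pos hp, dif_pos ht, if_neg]
  · congr 1 <;> exact Fin.ext rfl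
  · simpa [embT, Fin.ext_iff] using fun hh => h (Fin.ext hh)

lemma pre'_start (p : Fin N.np) :
    pre' N t₀ (emb N p) (embT N t₀) = Arc.weight (w0 N t₀ p) := by
  have hp : (emb N p).1 < N.np := p.2
  have ht : (embT N t₀).1 < N.nt := t₀.2
  have e : (⟨(embT N t₀).1, ht⟩ : Fin N.nt) = t₀ := Fin.ext rfl
  rw [pre', dif_pos hp, dif_pos ht, if_pos e]
  rfl

lemma pre'_idle_old (t : Fin N.nt) : pre' N t₀ (idleP N) (embT N t) = Arc.weight 1 := by
  have h1 : ¬ (idleP N).1 < N.np := by simp [idleP]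
  rw [pre', dif_neg h1, if_pos (by simp [idleP]), if_pos (show (embT N t).1 < N.nt from t.2)]

lemma pre'_busy_old (t : Fin N.nt) : pre' N t₀ (busyP N) (embT N t) = Arc.weight 0 := by
  have h1 : ¬ (busyP N).1 < N.np := by simp [busyP]
  rw [pre', dif_neg h1, if_neg (by simp [busyP]), if_pos (show (embT N t).1 < N.nt from t.2)]

lemma pre'_old_drain (p q : Fin N.np) :
    pre' N t₀ (emb N p) (drainT N q) =
      if N.pre q t₀ = Arc.reset ∧ q = p then Arc.weight 1 else Arc.weight 0 := by
  have hp : (emb N p).1 < N.np := p.2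
  have ht : ¬ (drainT N q).1 < N.nt := by simp [drainT]
  have ht2 : (drainT N q).1 - N.nt < N.np := by simp [drainT]
  rw [pre', dif_pos hp, dif_neg ht, dif_pos ht2]
  have e1 : (⟨(drainT N q).1 - N.nt, ht2⟩ : Fin N.np) = q := Fin.ext (by simp [drainT])
  rw [e1]
  have : ((drainT N q).1 - N.nt = (emb N p).1) ↔ (q = p) := by
    simp [drainT, emb, Fin.ext_iff]
  simp only [this]

lemma pre'_idle_drain (q : Fin N.np) :
    pre' N t₀ (idleP N) (drainT N q) =
      if N.pre q t₀ = Arc.reset then Arc.weight 0 else Arc.weight 1 := by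
  have h1 : ¬ (idleP N).1 < N.np := by simp [idleP]
  have ht : ¬ (drainT N q).1 < N.nt := by simp [drainT]
  have ht2 : (drainT N q).1 - N.nt < N.np := by simp [drainT]
  rw [pre', dif_neg h1, if_pos (by simp [idleP]), if_neg ht, dif_pos ht2]
  have e1 : (⟨(drainT N q).1 - N.nt, ht2⟩ : Fin N.np) = q := Fin.ext (by simp [drainT])
  rw [e1]

lemma pre'_busy_drain (q : Fin N.np) :
    pre' N t₀ (busyP N) (drainT N q) = Arc.weight 1 := by
  have h1 : ¬ (busyP N).1 < N.np := by simp [busyP]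
  have ht : ¬ (drainT N q).1 < N.nt := by simp [drainT]
  rw [pre', dif_neg h1, if_neg (by simp [busyP]), if_neg ht]

lemma pre'_old_end (p : Fin N.np) :
    pre' N t₀ (emb N p) (endT N) =
      if (N.pre p t₀).isNat then Arc.weight 0 else Arc.inhibitor := by
  have hp : (emb N p).1 < N.np := p.2
  have ht : ¬ (endT N).1 < N.nt := by simp [endT]
  have ht2 : ¬ (endT N).1 - N.nt < N.np := by simp [endT]
  rw [pre', dif_pos hp, dif_neg ht, dif_neg ht2]
  rfl

lemma pre'_idle_end : pre' N t₀ (idleP N) (endT N) = Arc.weight 0 := by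
  have h1 : ¬ (idleP N).1 < N.np := by simp [idleP]
  have ht : ¬ (endT N).1 < N.nt := by simp [endT]
  have ht2 : ¬ (endT N).1 - N.nt < N.np := by simp [endT]
  rw [pre', dif_neg h1, if_pos (by simp [idleP]), if_neg ht, dif_neg ht2]

lemma pre'_busy_end : pre' N t₀ (busyP N) (endT N) = Arc.weight 1 := by
  have h1 : ¬ (busyP N).1 < N.np := by simp [busyP]
  have ht : ¬ (endT N).1 < N.nt := by simp [endT]
  rw [pre', dif_neg h1, if_neg (by simp [busyP]), if_neg ht]

-- post' evaluation lemmas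
lemma post'_copy (p : Fin N.np) {t : Fin N.nt} (h : t ≠ t₀) :
    post' N t₀ (embT N t) (emb N p) = N.post t p := by
  have ht : (embT N t).1 < N.nt := t.2
  rw [post', dif_pos ht, if_neg (by simpa [embT, Fin.ext_iff] using fun hh => h (Fin.ext hh)),
    dif_pos (show (emb N p).1 < N.np from p.2)]
  congr 1 <;> exact Fin.ext rfl

lemma post'_copy_idle {t : Fin N.nt} (h : t ≠ t₀) :
    post' N t₀ (embT N t) (idleP N) = 1 := by
  have ht : (embT N t).1 < N.nt := t.2
  rw [post', dif_pos ht, if_neg (by simpa [embT, Fin.ext_iff] using fun hh => h (Fin.ext hh)),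
    dif_neg (by simp [idleP]), if_pos (by simp [idleP])]

lemma post'_copy_busy {t : Fin N.nt} (h : t ≠ t₀) :
    post' N t₀ (embT N t) (busyP N) = 0 := by
  have ht : (embT N t).1 < N.nt := t.2
  rw [post', dif_pos ht, if_neg (by simpa [embT, Fin.ext_iff] using fun hh => h (Fin.ext hh)),
    dif_neg (by simp [busyP]), if_neg (by simp [busyP])]

lemma post'_start (p : Fin (N.np + 2)) :
    post' N t₀ (embT N t₀) p = if p.1 = N.np + 1 then 1 else 0 := by
  have ht : (embT N t₀).1 < N.nt := t₀.2
  have e : (⟨(embT N t₀).1, ht⟩ : Fin N.nt) = t₀ := Fin.ext rfl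
  rw [post', dif_pos ht, if_pos e]

lemma post'_drain (q : Fin N.np) (p : Fin (N.np + 2)) :
    post' N t₀ (drainT N q) p = if p.1 = N.np + 1 then 1 else 0 := by
  have ht : ¬ (drainT N q).1 < N.nt := by simp [drainT]
  rw [post', dif_neg ht, if_pos (show (drainT N q).1 < N.nt + N.np by simp [drainT])]

lemma post'_end (p : Fin N.np) : post' N t₀ (endT N) (emb N p) = N.post t₀ p := by
  have ht : ¬ (endT N).1 < N.nt := by simp [endT]
  rw [post', dif_neg ht, if_neg (by simp [endT]), dif_pos (show (emb N p).1 < N.np from p.2)]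
  rfl

lemma post'_end_idle : post' N t₀ (endT N) (idleP N) = 1 := by
  have ht : ¬ (endT N).1 < N.nt := by simp [endT]
  rw [post', dif_neg ht, if_neg (by simp [endT]), dif_neg (by simp [idleP]),
    if_pos (by simp [idleP])]

lemma post'_end_busy : post' N t₀ (endT N) (busyP N) = 0 := by
  have ht : ¬ (endT N).1 < N.nt := by simp [endT]
  rw [post', dif_neg ht, if_neg (by simp [endT]), dif_neg (by simp [busyP]),
    if_neg (by simp [busyP])]

-- ### no transfer arcs in N'
lemma noTransfer' (hNT : N.NoTransfer) : (N' N t₀).NoTransfer := by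
  intro p t p'
  simp only [N'_pre]
  rcases place_cases N p with ⟨q, rfl⟩ | rfl | rfl <;>
    rcases trans_cases N t with ⟨s, rfl⟩ | ⟨r, rfl⟩ | rfl
  · by_cases hs : s = t₀
    · subst hs; rw [pre'_start]; simp
    · rw [pre'_copy N t₀ q hs]
      cases e : N.pre q s <;> simp [mapArc]
      exact absurd e (hNT _ _ _)
  · rw [pre'_old_drain]; split <;> simp
  · rw [pre'_old_end]; split <;> simp
  · rw [pre'_idle_old]; simp
  · rw [pre'_idle_drain]; split <;> simp
  · rw [pre'_idle_end]; simp
  · rw [pre'_busy_old]; simp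
  · rw [pre'_busy_drain]; simp
  · rw [pre'_busy_end]; simp

-- ### copy transitions
lemma copy_firable (M : N.Marking) {t : Fin N.nt} (h : t ≠ t₀) (H : N.Firable M t) :
    (N' N t₀).Firable (fM N t₀ M) (embT N t) := by
  intro p
  simp only [N'_pre]
  rcases place_cases N p with ⟨q, rfl⟩ | rfl | rfl
  · rw [pre'_copy N t₀ q h]
    have hq := H q
    cases e : N.pre q t <;> simp only [e, mapArc] at hq ⊢ <;> simpa using hq
  · rw [pre'_idle_old]; simp
  · rw [pre'_busy_old]; simp

lemma copy_firable_inv (M : N.Marking) {t : Fin N.nt} (h : t ≠ t₀)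
    (H : (N' N t₀).Firable (fM N t₀ M) (embT N t)) : N.Firable M t := by
  intro q
  have hq := H (emb N q)
  simp only [N'_pre, pre'_copy N t₀ q h] at hq
  cases e : N.pre q t <;> simp only [e, mapArc] at hq ⊢ <;> simpa using hq

lemma copy_fire (hNT : N.NoTransfer) (M : N.Marking) {t : Fin N.nt} (h : t ≠ t₀) :
    (N' N t₀).fire (fM N t₀ M) (embT N t) = fM N t₀ (N.fire M t) := by
  funext p
  rw [fire_apply (noTransfer' N t₀ hNT)]
  simp only [N'_pre, N'_post]
  rcases place_cases N p with ⟨q, rfl⟩ | rfl | rfl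
  · rw [pre'_copy N t₀ q h, post'_copy N t₀ q h, fM_emb, fM_emb, fire_apply hNT]
    cases e : N.pre q t <;> simp [e, mapArc]
  · rw [pre'_idle_old, post'_copy_idle N t₀ h, fM_idle, fM_idle]
  · rw [pre'_busy_old, post'_copy_busy N t₀ h, fM_busy, fM_busy]

-- ### start transition
lemma start_firable (M : N.Marking) (H : ∀ p, w0 N t₀ p ≤ M p) :
    (N' N t₀).Firable (fM N t₀ M) (embT N t₀) := by
  intro p
  simp only [N'_pre]
  rcases place_cases N p with ⟨q, rfl⟩ | rfl | rfl
  · rw [pre'_start]; simpa using H q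
  · rw [pre'_idle_old]; simp
  · rw [pre'_busy_old]; simp

lemma start_firable_inv (M : N.Marking)
    (H : (N' N t₀).Firable (fM N t₀ M) (embT N t₀)) : ∀ p, w0 N t₀ p ≤ M p := by
  intro q
  have hq := H (emb N q)
  simp only [N'_pre, pre'_start] at hq
  simpa using hq

lemma start_fire (hNT : N.NoTransfer) (M : N.Marking) :
    (N' N t₀).fire (fM N t₀ M) (embT N t₀) = bM N t₀ (fun p => M p - w0 N t₀ p) := by
  funext p
  rw [fire_apply (noTransfer' N t₀ hNT)]
  simp only [N'_pre, N'_post, post'_start]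
  rcases place_cases N p with ⟨q, rfl⟩ | rfl | rfl
  · rw [pre'_start, fM_emb, bM_emb]
    have : ¬ ((emb N q).1 = N.np + 1) := by have := q.2; simp [emb]; omega
    simp [this]
  · rw [pre'_idle_old, fM_idle, bM_idle]
    have : ¬ ((idleP N).1 = N.np + 1) := by simp [idleP]
    simp [this]
  · rw [pre'_busy_old, fM_busy, bM_busy]
    have : (busyP N).1 = N.np + 1 := by simp [busyP]
    simp [this]

-- ### drain transitions
lemma drain_firable (X : N.Marking) {q : Fin N.np} (hq : N.pre q t₀ = Arc.reset)
    (h1 : 1 ≤ X q) : (N' N t₀).Firable (bM N t₀ X) (drainT N q) := by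
  intro p
  simp only [N'_pre]
  rcases place_cases N p with ⟨r, rfl⟩ | rfl | rfl
  · rw [pre'_old_drain]
    by_cases hc : N.pre q t₀ = Arc.reset ∧ q = r
    · rw [if_pos hc]; simpa [← hc.2] using h1
    · rw [if_neg hc]; simp
  · rw [pre'_idle_drain, if_pos hq]; simp
  · rw [pre'_busy_drain]; simp

lemma drain_firable_inv (X : N.Marking) {q : Fin N.np} (hq : N.pre q t₀ = Arc.reset)
    (H : (N' N t₀).Firable (bM N t₀ X) (drainT N q)) : 1 ≤ X q := by
  have h := H (emb N q)
  rw [show (N' N t₀).pre = pre' N t₀ from rfl, pre'_old_drain,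
    if_pos (And.intro hq rfl)] at h
  simpa using h

lemma drain_dead_not_firable (X : N.Marking) {q : Fin N.np}
    (hq : ¬ N.pre q t₀ = Arc.reset) : ¬ (N' N t₀).Firable (bM N t₀ X) (drainT N q) := by
  intro H
  have h := H (idleP N)
  simp only [N'_pre, pre'_idle_drain, if_neg hq] at h
  simp at h

lemma drain_not_firable_f (M : N.Marking) (q : Fin N.np) :
    ¬ (N' N t₀).Firable (fM N t₀ M) (drainT N q) := by
  intro H
  have h := H (busyP N)
  simp only [N'_pre, pre'_busy_drain] at h
  simp at h

lemma copy_not_firable_b (X : N.Marking) (t : Fin N.nt) :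
    ¬ (N' N t₀).Firable (bM N t₀ X) (embT N t) := by
  intro H
  have h := H (idleP N)
  simp only [N'_pre, pre'_idle_old] at h
  simp at h

lemma end_not_firable_f (M : N.Marking) :
    ¬ (N' N t₀).Firable (fM N t₀ M) (endT N) := by
  intro H
  have h := H (busyP N)
  simp only [N'_pre, pre'_busy_end] at h
  simp at h

lemma drain_fire (hNT : N.NoTransfer) (X : N.Marking) {q : Fin N.np}
    (hq : N.pre q t₀ = Arc.reset) :
    (N' N t₀).fire (bM N t₀ X) (drainT N q)
      = bM N t₀ (fun p => if p = q then X p - 1 else X p) := by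
  funext p
  rw [fire_apply (noTransfer' N t₀ hNT)]
  simp only [N'_pre, N'_post, post'_drain]
  rcases place_cases N p with ⟨r, rfl⟩ | rfl | rfl
  · rw [pre'_old_drain, bM_emb, bM_emb]
    have : ¬ ((emb N r).1 = N.np + 1) := by have := r.2; simp [emb]; omega
    by_cases hr : r = q
    · subst hr; rw [if_pos ⟨hq, rfl⟩]; simp [this]
    · rw [if_neg (fun hc => hr hc.2.symm)]; simp [this, hr]
  · rw [pre'_idle_drain, if_pos hq, bM_idle, bM_idle]
    have : ¬ ((idleP N).1 = N.np + 1) := by simp [idleP]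
    simp [this]
  · rw [pre'_busy_drain, bM_busy, bM_busy]
    have : (busyP N).1 = N.np + 1 := by simp [busyP]
    simp [this]

-- ### end transition
lemma end_firable (X : N.Marking)
    (H : ∀ p, (N.pre p t₀).isNat = false → X p = 0) :
    (N' N t₀).Firable (bM N t₀ X) (endT N) := by
  intro p
  simp only [N'_pre]
  rcases place_cases N p with ⟨r, rfl⟩ | rfl | rfl
  · rw [pre'_old_end]
    by_cases hr : (N.pre r t₀).isNat
    · rw [if_pos hr]; simp
    · rw [if_neg hr]
      simpa using H r (by simpa using hr)
  · rw [pre'_idle_end]; simp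
  · rw [pre'_busy_end]; simp

lemma end_firable_inv (X : N.Marking)
    (H : (N' N t₀).Firable (bM N t₀ X) (endT N)) :
    ∀ p, (N.pre p t₀).isNat = false → X p = 0 := by
  intro r hr
  have h := H (emb N r)
  simp only [N'_pre, pre'_old_end, hr] at h
  simpa using h

lemma end_fire (hNT : N.NoTransfer) (X : N.Marking) :
    (N' N t₀).fire (bM N t₀ X) (endT N)
      = fM N t₀ (fun p => X p + N.post t₀ p) := by
  funext p
  rw [fire_apply (noTransfer' N t₀ hNT)]
  simp only [N'_pre, N'_post]
  rcases place_cases N p with ⟨r, rfl⟩ | rfl | rfl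
  · rw [pre'_old_end, post'_end, bM_emb, fM_emb]
    by_cases hr : (N.pre r t₀).isNat
    · rw [if_pos hr]; simp
    · rw [if_neg hr]
  · rw [pre'_idle_end, post'_end_idle, bM_idle, fM_idle]
  · rw [pre'_busy_end, post'_end_busy, bM_busy, fM_busy]

-- ### forward simulation
def zeroR (X : N.Marking) : N.Marking := fun p =>
  if N.pre p t₀ = Arc.reset then 0 else X p

lemma drain_all (hNT : N.NoTransfer) (X : N.Marking) :
    ∃ ts, (N' N t₀).FireSeq (bM N t₀ X) ts (bM N t₀ (zeroR N t₀ X)) := by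
  generalize hS : (∑ p, if N.pre p t₀ = Arc.reset then X p else 0) = S
  induction S using Nat.strong_induction_on generalizing X with
  | _ S ih =>
  by_cases h0 : ∀ p, N.pre p t₀ = Arc.reset → X p = 0
  · refine ⟨[], ?_⟩
    show bM N t₀ (zeroR N t₀ X) = bM N t₀ X
    have hzz : zeroR N t₀ X = X := by
      funext p
      unfold zeroR
      split
      · next hp => exact (h0 p hp).symm
      · rfl
    rw [hzz]
  · push_neg at h0
    obtain ⟨q, hq, hXq⟩ := h0
    have h1 : 1 ≤ X q := Nat.one_le_iff_ne_zero.2 hXq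
    set X' : N.Marking := fun p => if p = q then X p - 1 else X p with hX'
    have e2 : X q + ∑ x ∈ Finset.univ.erase q, (if N.pre x t₀ = Arc.reset then X x else 0)
        = S := by
      rw [← hS, ← Finset.add_sum_erase Finset.univ _ (Finset.mem_univ q)]
      simp [hq]
    have hsum : (∑ p, if N.pre p t₀ = Arc.reset then X' p else 0) = S - 1 := by
      have e1 : (fun p => if N.pre p t₀ = Arc.reset then X' p else 0)
          = Function.update (fun p => if N.pre p t₀ = Arc.reset then X p else 0) q (X q - 1) := by
        funext p
        by_cases hp : p = q
        · subst hp; simp [Function.update, hq, hX']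
        · simp [Function.update, hp, hX']
      rw [e1, Finset.sum_update_of_mem (Finset.mem_univ q), ← Finset.erase_eq]
      omega
    have hS1 : 1 ≤ S := by omega
    obtain ⟨ts, hts⟩ := ih (S - 1) (by omega) X' hsum
    have hz : zeroR N t₀ X' = zeroR N t₀ X := by
      funext p
      unfold zeroR
      split
      · rfl
      · next hp =>
        have : p ≠ q := fun e => hp (e ▸ hq)
        simp [hX', this]
    refine ⟨drainT N q :: ts, drain_firable N t₀ X hq h1, ?_⟩
    rw [drain_fire N t₀ hNT X hq]
    rw [hz] at hts
    exact hts

lemma sim_t0 (hNT : N.NoTransfer) (M : N.Marking) (H : N.Firable M t₀) :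
    (N' N t₀).Reach (fM N t₀ M) (fM N t₀ (N.fire M t₀)) := by
  have hw : ∀ p, w0 N t₀ p ≤ M p := by
    intro p
    have hp := H p
    unfold w0
    cases e : N.pre p t₀ <;> simp [e] at hp ⊢ <;> omega
  set X : N.Marking := fun p => M p - w0 N t₀ p with hX
  have hinh : ∀ p, (N.pre p t₀).isNat = false → zeroR N t₀ X p = 0 := by
    intro p hp
    have hq := H p
    unfold zeroR
    cases e : N.pre p t₀
    · rw [e] at hp; simp [Arc.isNat] at hp
    · rw [e] at hq
      simp [hX, e]
      unfold w0
      rw [e]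
      omega
    · simp [e]
    · exact absurd e (hNT _ _ _)
  have hfinal : (fun p => zeroR N t₀ X p + N.post t₀ p) = N.fire M t₀ := by
    funext p
    rw [fire_apply hNT]
    unfold zeroR
    cases e : N.pre p t₀
    · next n =>
      have hn : w0 N t₀ p = n := by unfold w0; rw [e]
      simp [hX, hn]
    · have hn : w0 N t₀ p = 0 := by unfold w0; rw [e]
      simp [hX, hn]
    · simp
    · exact absurd e (hNT _ _ _)
  obtain ⟨ts, hts⟩ := drain_all N t₀ hNT X
  refine ⟨embT N t₀ :: (ts ++ [endT N]), start_firable N t₀ M hw, ?_⟩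
  rw [start_fire N t₀ hNT M]
  refine fireSeq_append hts ?_
  refine ⟨end_firable N t₀ (zeroR N t₀ X) hinh, ?_⟩
  show fM N t₀ (N.fire M t₀) = _
  rw [end_fire N t₀ hNT]
  exact congrArg _ hfinal.symm

lemma forward (hNT : N.NoTransfer) (M₁ M₂ : N.Marking) (h : N.Reach M₁ M₂) :
    (N' N t₀).Reach (fM N t₀ M₁) (fM N t₀ M₂) := by
  obtain ⟨ts, hts⟩ := h
  induction ts generalizing M₁ with
  | nil =>
    have : M₂ = M₁ := hts
    subst this
    exact ⟨[], rfl⟩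
  | cons t ts ih =>
    obtain ⟨Hf, hrest⟩ := hts
    have step2 := ih (N.fire M₁ t) hrest
    by_cases ht : t = t₀
    · rw [ht] at Hf step2
      exact reach_trans (sim_t0 N t₀ hNT M₁ Hf) step2
    · refine reach_trans ⟨[embT N t], copy_firable N t₀ M₁ ht Hf, ?_⟩ step2
      exact (copy_fire N t₀ hNT M₁ ht).symm

-- ### backward simulation
lemma back2 (hNT : N.NoTransfer) (M₂ : N.Marking) :
    ∀ (ts : List (Fin (N' N t₀).nt)) (X : N.Marking),
      (N' N t₀).FireSeq (bM N t₀ X) ts (fM N t₀ M₂) →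
      (∀ p, N.pre p t₀ = Arc.inhibitor → X p = 0) ∧
      ∃ rest : List (Fin (N' N t₀).nt), rest.length < ts.length ∧
        (N' N t₀).FireSeq
          (fM N t₀ (fun p => zeroR N t₀ X p + N.post t₀ p)) rest (fM N t₀ M₂) := by
  intro ts
  induction ts with
  | nil =>
    intro X h
    exfalso
    have h' : fM N t₀ M₂ = bM N t₀ X := h
    have := congrFun h' (idleP N)
    simp at this
  | cons u ts ih =>
    intro X h
    obtain ⟨Hf, hrest⟩ := h
    rcases trans_cases N u with ⟨t, rfl⟩ | ⟨q, rfl⟩ | rfl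
    · exact absurd Hf (copy_not_firable_b N t₀ X t)
    · by_cases hq : N.pre q t₀ = Arc.reset
      · have h1 : 1 ≤ X q := drain_firable_inv N t₀ X hq Hf
        rw [drain_fire N t₀ hNT X hq] at hrest
        obtain ⟨hinh, rest, hlen, hseq⟩ := ih _ hrest
        refine ⟨?_, rest, by simpa using Nat.lt_succ_of_lt hlen, ?_⟩
        · intro p hp
          have hne : ¬ (p = q) := fun e => by rw [e, hq] at hp; cases hp
          have := hinh p hp
          rw [if_neg hne] at this
          exact this
        · have hz : (fun p => zeroR N t₀ (fun p => if p = q then X p - 1 else X p) p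
              + N.post t₀ p) = fun p => zeroR N t₀ X p + N.post t₀ p := by
            funext p
            unfold zeroR
            by_cases hp : N.pre p t₀ = Arc.reset
            · rw [if_pos hp, if_pos hp]
            · have hne : p ≠ q := fun e => hp (by rw [e]; exact hq)
              rw [if_neg hp, if_neg hp]
              simp [hne]
          rw [hz] at hseq
          exact hseq
      · exact absurd Hf (drain_dead_not_firable N t₀ X hq)
    · have hz := end_firable_inv N t₀ X Hf
      rw [end_fire N t₀ hNT X] at hrest
      have hx : (fun p => X p + N.post t₀ p)
          = fun p => zeroR N t₀ X p + N.post t₀ p := by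
        funext p
        unfold zeroR
        by_cases hp : N.pre p t₀ = Arc.reset
        · rw [if_pos hp, hz p (by simp [hp, Arc.isNat])]
        · rw [if_neg hp]
      rw [hx] at hrest
      refine ⟨fun p hp => hz p (by simp [hp, Arc.isNat]), ts, Nat.lt_succ_self _, hrest⟩

lemma back1 (hNT : N.NoTransfer) (M₂ : N.Marking) :
    ∀ (n : ℕ) (ts : List (Fin (N' N t₀).nt)) (M : N.Marking), ts.length ≤ n →
      (N' N t₀).FireSeq (fM N t₀ M) ts (fM N t₀ M₂) → N.Reach M M₂ := by
  intro n
  induction n with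
  | zero =>
    intro ts M hlen h
    have hts : ts = [] := List.length_eq_zero_iff.mp (Nat.le_zero.mp hlen)
    subst hts
    have h' : fM N t₀ M₂ = fM N t₀ M := h
    have : M₂ = M := by
      funext p
      have := congrFun h' (emb N p)
      simpa using this
    subst this
    exact ⟨[], rfl⟩
  | succ n ih =>
    intro ts M hlen h
    cases ts with
    | nil =>
      have h' : fM N t₀ M₂ = fM N t₀ M := h
      have : M₂ = M := by
        funext p
        have := congrFun h' (emb N p)
        simpa using this
      subst this
      exact ⟨[], rfl⟩
    | cons u ts' =>
      obtain ⟨Hf, hrest⟩ := h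
      have hlen' : ts'.length ≤ n := by simpa using hlen
      rcases trans_cases N u with ⟨t, rfl⟩ | ⟨q, rfl⟩ | rfl
      · by_cases ht : t = t₀
        · rw [ht] at Hf hrest
          have hw := start_firable_inv N t₀ M Hf
          rw [start_fire N t₀ hNT M] at hrest
          obtain ⟨hinh, rest, hlen2, hseq⟩ := back2 N t₀ hNT M₂ ts' _ hrest
          have Hf0 : N.Firable M t₀ := by
            intro p
            cases e : N.pre p t₀ <;> simp [e]
            · next m =>
              have := hw p
              unfold w0 at this
              rw [e] at this
              exact this
            · have := hinh p e
              have hz : w0 N t₀ p = 0 := by unfold w0; rw [e]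
              rw [hz] at this
              omega
          have hM : (fun p => zeroR N t₀ (fun p => M p - w0 N t₀ p) p + N.post t₀ p)
              = N.fire M t₀ := by
            funext p
            rw [fire_apply hNT]
            unfold zeroR
            cases e : N.pre p t₀
            · next m =>
              have hn : w0 N t₀ p = m := by unfold w0; rw [e]
              simp [hn]
            · have hn : w0 N t₀ p = 0 := by unfold w0; rw [e]
              simp [hn]
            · simp
            · exact absurd e (hNT _ _ _)
          rw [hM] at hseq
          have := ih rest (N.fire M t₀) (by omega) hseq
          exact reach_trans ⟨[t₀], Hf0, rfl⟩ this
        · have HfN : N.Firable M t := copy_firable_inv N t₀ M ht Hf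
          rw [copy_fire N t₀ hNT M ht] at hrest
          have := ih ts' (N.fire M t) hlen' hrest
          exact reach_trans ⟨[t], HfN, rfl⟩ this
      · exact absurd Hf (drain_not_firable_f N t₀ M q)
      · exact absurd Hf (end_not_firable_f N t₀ M)

-- ### hierarchy
def le' (le : Fin N.np → Fin N.np → Prop) (a b : Fin (N.np + 2)) : Prop :=
  if ha : a.1 < N.np then
    (if hb : b.1 < N.np then le ⟨a.1, ha⟩ ⟨b.1, hb⟩ else True)
  else (if b.1 < N.np then False else a.1 ≤ b.1)

variable {le : Fin N.np → Fin N.np → Prop}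

lemma le'_emb_emb (p q : Fin N.np) : le' N le (emb N p) (emb N q) ↔ le p q := by
  unfold le' emb
  rw [dif_pos p.2, dif_pos q.2]

lemma le'_new_emb {a : Fin (N.np + 2)} (ha : ¬ a.1 < N.np) (q : Fin N.np) :
    ¬ le' N le a (emb N q) := by
  unfold le' emb
  rw [dif_neg ha, if_pos q.2]
  exact id

lemma le'_lin (h : IsLinearOrder (Fin N.np) le) :
    IsLinearOrder (Fin (N.np + 2)) (le' N le) := by
  haveI := h
  refine { refl := ?_, trans := ?_, antisymm := ?_, total := ?_ }
  · intro a
    unfold le'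
    split_ifs <;> first | exact Std.Refl.refl _ | trivial | omega
  · intro a b c hab hbc
    unfold le' at *
    split_ifs at * <;>
      first
        | trivial
        | omega
        | exact IsTrans.trans _ _ _ hab hbc
  · intro a b hab hba
    unfold le' at *
    split_ifs at * <;>
      first
        | trivial
        | (exact Fin.ext (by omega))
        | (refine Fin.ext ?_
           have h3 := Std.Antisymm.antisymm (r := le) _ _ hab hba
           have h4 := congrArg Fin.val h3
           exact h4)
  · intro a b
    unfold le'
    split_ifs <;>
      first
        | (left; trivial)
        | (right; trivial)
        | omega
        | exact Std.Total.total _ _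

lemma respects' (hR : N.RespectsHierarchy le) :
    (N' N t₀).RespectsHierarchy (le' N le) := by
  intro p t hnat q hle
  simp only [N'_pre] at hnat ⊢
  rcases place_cases N p with ⟨po, rfl⟩ | rfl | rfl
  · -- p is an old place
    rcases place_cases N q with ⟨qo, rfl⟩ | rfl | rfl
    rotate_left
    · exact absurd hle (le'_new_emb N (by simp [idleP]) po)
    · exact absurd hle (le'_new_emb N (by simp [busyP]) po)
    have hleq : le qo po := (le'_emb_emb N qo po).mp hle
    rcases trans_cases N t with ⟨s, rfl⟩ | ⟨r, rfl⟩ | rfl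
    · by_cases hs : s = t₀
      · rw [hs, pre'_start] at hnat
        simp [Arc.isNat] at hnat
      · rw [pre'_copy N t₀ po hs] at hnat
        rw [pre'_copy N t₀ qo hs, mapArc_isNat]
        rw [mapArc_isNat] at hnat
        exact hR po s hnat qo hleq
    · rw [pre'_old_drain] at hnat
      split at hnat <;> simp [Arc.isNat] at hnat
    · rw [pre'_old_end] at hnat
      by_cases hpo : (N.pre po t₀).isNat
      · rw [if_pos hpo] at hnat; simp [Arc.isNat] at hnat
      · have hq := hR po t₀ (by simpa using hpo) qo hleq
        rw [pre'_old_end, if_neg (by simp [hq])]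
        rfl
  · -- p = idle : impossible, all arcs are ordinary
    exfalso
    rcases trans_cases N t with ⟨s, rfl⟩ | ⟨r, rfl⟩ | rfl
    · rw [pre'_idle_old] at hnat; simp [Arc.isNat] at hnat
    · rw [pre'_idle_drain] at hnat
      split at hnat <;> simp [Arc.isNat] at hnat
    · rw [pre'_idle_end] at hnat; simp [Arc.isNat] at hnat
  · exfalso
    rcases trans_cases N t with ⟨s, rfl⟩ | ⟨r, rfl⟩ | rfl
    · rw [pre'_busy_old] at hnat; simp [Arc.isNat] at hnat
    · rw [pre'_busy_drain] at hnat; simp [Arc.isNat] at hnat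
    · rw [pre'_busy_end] at hnat; simp [Arc.isNat] at hnat

-- ### counting reset transitions
lemma mem_reset_filter {u : Fin (N' N t₀).nt}
    (hu : ∃ p', (N' N t₀).pre p' u = Arc.reset) (hNT : N.NoTransfer) :
    ∃ (h : u.1 < N.nt), (⟨u.1, h⟩ : Fin N.nt) ≠ t₀ ∧
      ∃ p, N.pre p (⟨u.1, h⟩ : Fin N.nt) = Arc.reset := by
  obtain ⟨p', hp'⟩ := hu
  simp only [N'_pre] at hp'
  rcases trans_cases N u with ⟨t, rfl⟩ | ⟨r, rfl⟩ | rfl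
  · rcases place_cases N p' with ⟨q, rfl⟩ | rfl | rfl
    rotate_left
    · rw [pre'_idle_old] at hp'; cases hp'
    · rw [pre'_busy_old] at hp'; cases hp'
    by_cases hs : t = t₀
    · rw [hs, pre'_start] at hp'; cases hp'
    · rw [pre'_copy N t₀ q hs] at hp'
      have hq : N.pre q t = Arc.reset := by
        cases e : N.pre q t <;> rw [e] at hp' <;> simp [mapArc] at hp' <;> try rfl
      refine ⟨t.2, ?_, q, ?_⟩
      · simpa [Fin.ext_iff, embT] using fun hh => hs (Fin.ext hh)
      · exact hq
  · exfalso
    rcases place_cases N p' with ⟨q, rfl⟩ | rfl | rfl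
    · rw [pre'_old_drain] at hp'
      revert hp'
      split <;> intro hp' <;> cases hp'
    · rw [pre'_idle_drain] at hp'
      revert hp'
      split <;> intro hp' <;> cases hp'
    · rw [pre'_busy_drain] at hp'; cases hp'
  · exfalso
    rcases place_cases N p' with ⟨q, rfl⟩ | rfl | rfl
    · rw [pre'_old_end] at hp'
      revert hp'
      split <;> intro hp' <;> cases hp'
    · rw [pre'_idle_end] at hp'; cases hp'
    · rw [pre'_busy_end] at hp'; cases hp'

lemma count_le (hNT : N.NoTransfer) (ht₀ : ∃ p, N.pre p t₀ = Arc.reset) :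
    (N' N t₀).resetTransCount + 1 ≤ N.resetTransCount := by
  unfold SNet.resetTransCount
  set A := Finset.univ.filter
    (fun t : Fin (N' N t₀).nt => ∃ p, (N' N t₀).pre p t = Arc.reset) with hA
  set B := Finset.univ.filter (fun t : Fin N.nt => ∃ p, N.pre p t = Arc.reset) with hB
  have ht₀B : t₀ ∈ B := by simp [hB, ht₀]
  have hcard : A.card ≤ (B.erase t₀).card := by
    refine Finset.card_le_card_of_injOn
      (fun u => if h : u.1 < N.nt then (⟨u.1, h⟩ : Fin N.nt) else t₀) ?_ ?_
    · intro u hu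
      simp only [hA, Finset.mem_coe, Finset.mem_filter, Finset.mem_univ, true_and] at hu
      obtain ⟨h, hne, hres⟩ := mem_reset_filter N t₀ hu hNT
      simp only [dif_pos h, Finset.mem_coe, Finset.mem_erase, hB, Finset.mem_filter, Finset.mem_univ,
        true_and]
      exact ⟨hne, hres⟩
    · intro u hu v hv huv
      simp only [hA, Finset.mem_coe, Finset.mem_filter, Finset.mem_univ, true_and] at hu hv
      obtain ⟨h1, -, -⟩ := mem_reset_filter N t₀ hu hNT
      obtain ⟨h2, -, -⟩ := mem_reset_filter N t₀ hv hNT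
      simp only [dif_pos h1, dif_pos h2] at huv
      have h3 := congrArg Fin.val huv
      exact Fin.ext h3
  have := Finset.card_erase_of_mem ht₀B
  have hB1 : 1 ≤ B.card := Finset.card_pos.mpr ⟨t₀, ht₀B⟩
  omega

end Construction
end ResetElim

/-- every HSA(IR) net with at most `k ≥ 1` transitions having a
reset pre-arc reduces (preserving reachability in both directions) to an
HSA(IR) net with at most `k - 1` such transitions. -/
theorem hsa_ir_reset_elimination (k : ℕ) (hk : 1 ≤ k) (N : SNet)
    (hN : N.IsHSA_IR) (hcount : N.resetTransCount ≤ k) :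
    ∃ N' : SNet, N'.IsHSA_IR ∧ N'.resetTransCount ≤ k - 1 ∧
      ∃ f : N.Marking → N'.Marking,
        (∀ M₁ M₂ : N.Marking, N.Reach M₁ M₂ → N'.Reach (f M₁) (f M₂)) ∧
        (∀ M₁ M₂ : N.Marking, N'.Reach (f M₁) (f M₂) → N.Reach M₁ M₂) := by
  by_cases h0 : N.resetTransCount ≤ k - 1
  · exact ⟨N, hN, h0, id, fun _ _ h => h, fun _ _ h => h⟩
  · obtain ⟨le, hlin, hR, hNT⟩ := hN
    have hpos : 0 < (Finset.univ.filter
        (fun t : Fin N.nt => ∃ p, N.pre p t = Arc.reset)).card := by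
      have : 0 < N.resetTransCount := by omega
      exact this
    obtain ⟨t₀, ht₀mem⟩ := Finset.card_pos.mp hpos
    simp only [Finset.mem_filter, Finset.mem_univ, true_and] at ht₀mem
    refine ⟨ResetElim.N' N t₀, ?_, ?_, ResetElim.fM N t₀, ?_, ?_⟩
    · exact ⟨ResetElim.le' N le, ResetElim.le'_lin N hlin,
        ResetElim.respects' N t₀ hR, ResetElim.noTransfer' N t₀ hNT⟩
    · have := ResetElim.count_le N t₀ hNT ht₀mem
      omega
    · exact fun M₁ M₂ h => ResetElim.forward N t₀ hNT M₁ M₂ h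
    · intro M₁ M₂ h
      obtain ⟨ts, hts⟩ := h
      exact ResetElim.back1 N t₀ hNT M₂ ts.length ts M₁ le_rfl hts
end

section
/- A net N in Z_R HSA(I) has an infinite run from its initial marking M₀ if and only if there exist markings M₁ and M₂, a run ρ₀ from M₀ to M₁, and a nonempty run ρ from M₁ to M₂, such that M₁ ≤ M₂ componentwise and Compat_i(M₁, M₂) holds, where i is the maximum Index of the transitions occurring in ρ. -/
section AuxProofs

open SNet

variable {N : SNet} {le : Fin N.np → Fin N.np → Prop}

lemma aux_placeIndex_pos (hlin : IsLinearOrder (Fin N.np) le) (p : Fin N.np) :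
    1 ≤ N.placeIndex le p := by
  haveI := hlin
  have hne : Nonempty {q : Fin N.np // le q p} := ⟨⟨p, refl_of le p⟩⟩
  exact Nat.card_pos

lemma aux_le_of_index_le (hlin : IsLinearOrder (Fin N.np) le) {q p : Fin N.np}
    (h : N.placeIndex le q ≤ N.placeIndex le p) : le q p := by
  haveI := hlin
  by_contra hqp
  have hpq : le p q := (total_of le p q).resolve_right hqp
  have hss : {r : Fin N.np | le r p} ⊂ {r : Fin N.np | le r q} := by
    constructor
    · intro r hr
      exact trans_of le hr hpq
    · intro hsub
      exact hqp (hsub (show le q q from refl_of le q))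
  have hcard := Set.ncard_lt_ncard hss (Set.toFinite _)
  have e1 : N.placeIndex le p = ({r : Fin N.np | le r p}).ncard :=
    Nat.card_coe_set_eq _
  have e2 : N.placeIndex le q = ({r : Fin N.np | le r q}).ncard :=
    Nat.card_coe_set_eq _
  omega

lemma aux_sum_transfer (hnt : N.NoTransfer) (M : N.Marking) (t : Fin N.nt) (p : Fin N.np) :
    (∑ q : Fin N.np, if N.pre q t = Arc.transfer p then M q else 0) = 0 :=
  Finset.sum_eq_zero fun q _ => if_neg (hnt q t p)

lemma aux_fire_apply (hnt : N.NoTransfer) (M : N.Marking) (t : Fin N.nt) (p : Fin N.np) :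
    N.fire M t p = (match N.pre p t with
      | Arc.weight n => M p - n
      | Arc.inhibitor => M p
      | Arc.reset => 0
      | Arc.transfer _ => 0) + N.post t p := by
  show (match N.pre p t with
      | Arc.weight n => M p - n
      | Arc.inhibitor => M p
      | Arc.reset => 0
      | Arc.transfer _ => 0)
    + (∑ q : Fin N.np, if N.pre q t = Arc.transfer p then M q else 0) + N.post t p = _
  rw [aux_sum_transfer hnt, add_zero]

lemma aux_firable_of {M M' : N.Marking} {t : Fin N.nt} (hf : N.Firable M t)
    (hle : ∀ p, M p ≤ M' p) (hinh : ∀ p, N.pre p t = Arc.inhibitor → M p = M' p) :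
    N.Firable M' t := by
  intro p
  have h := hf p
  rcases hpre : N.pre p t with n | _ | _ | q <;> simp only [hpre] at h ⊢
  · exact h.trans (hle p)
  · rw [← hinh p hpre]; exact h

lemma aux_fire_mono {M M' : N.Marking} {t : Fin N.nt} (hle : ∀ p, M p ≤ M' p) :
    ∀ p, N.fire M t p ≤ N.fire M' t p := by
  intro p
  show (match N.pre p t with
      | Arc.weight n => M p - n
      | Arc.inhibitor => M p
      | Arc.reset => 0
      | Arc.transfer _ => 0)
    + (∑ q : Fin N.np, if N.pre q t = Arc.transfer p then M q else 0) + N.post t p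
    ≤ (match N.pre p t with
      | Arc.weight n => M' p - n
      | Arc.inhibitor => M' p
      | Arc.reset => 0
      | Arc.transfer _ => 0)
    + (∑ q : Fin N.np, if N.pre q t = Arc.transfer p then M' q else 0) + N.post t p
  refine Nat.add_le_add (Nat.add_le_add ?_ ?_) le_rfl
  · rcases hpre : N.pre p t with n | _ | _ | q <;> simp only [hpre]
    · exact Nat.sub_le_sub_right (hle p) n
    · exact hle p
    · exact le_rfl
    · exact le_rfl
  · refine Finset.sum_le_sum fun q _ => ?_
    split
    · exact hle q
    · exact le_rfl

lemma aux_fire_eq_of_eq (hnt : N.NoTransfer) {M M' : N.Marking} (t : Fin N.nt)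
    {p : Fin N.np} (hp : M p = M' p) : N.fire M t p = N.fire M' t p := by
  rw [aux_fire_apply hnt, aux_fire_apply hnt, hp]

lemma aux_inh_index_le {p : Fin N.np} {t : Fin N.nt} (hpre : N.pre p t = Arc.inhibitor) :
    N.placeIndex le p ≤ N.transIndex le t :=
  Finset.le_sup (Finset.mem_filter.mpr ⟨Finset.mem_univ p, hpre⟩)

lemma aux_le_runMax {t : Fin N.nt} : ∀ {ts : List (Fin N.nt)}, t ∈ ts →
    N.transIndex le t ≤ N.runMaxIndex le ts := by
  intro ts
  induction ts with
  | nil => intro h; exact absurd h List.not_mem_nil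
  | cons t' ts ih =>
    intro h
    rcases List.mem_cons.mp h with rfl | h'
    · exact le_max_left _ _
    · exact (ih h').trans (le_max_right _ _)

lemma aux_runMax_le {ts : List (Fin N.nt)} {i : ℕ}
    (h : ∀ t ∈ ts, N.transIndex le t ≤ i) : N.runMaxIndex le ts ≤ i := by
  induction ts with
  | nil => exact Nat.zero_le i
  | cons t ts ih =>
    exact max_le (h t List.mem_cons_self)
      (ih fun t' ht' => h t' (List.mem_cons_of_mem t ht'))

lemma aux_dominate (hlin : IsLinearOrder (Fin N.np) le) (hnt : N.NoTransfer) (i : ℕ) :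
    ∀ (ts : List (Fin N.nt)) (M M' Mf : N.Marking),
      N.FireSeq M ts Mf → (∀ p, M p ≤ M' p) → N.Compat le i M M' →
      (∀ t ∈ ts, N.transIndex le t ≤ i) →
      ∃ Mf', N.FireSeq M' ts Mf' ∧ (∀ p, Mf p ≤ Mf' p) ∧ N.Compat le i Mf Mf' := by
  intro ts
  induction ts with
  | nil =>
    intro M M' Mf hseq hle hc _
    refine ⟨M', rfl, ?_, ?_⟩
    · rw [show Mf = M from hseq]; exact hle
    · rw [show Mf = M from hseq]; exact hc
  | cons t ts ih =>
    intro M M' Mf hseq hle hc hidx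
    obtain ⟨hf, hrest⟩ := hseq
    have hf' : N.Firable M' t :=
      aux_firable_of hf hle (fun p hp =>
        hc p ((aux_inh_index_le hp).trans (hidx t List.mem_cons_self)))
    obtain ⟨Mf', h1, h2, h3⟩ := ih (N.fire M t) (N.fire M' t) Mf hrest
      (aux_fire_mono hle) (fun p hp => aux_fire_eq_of_eq hnt t (hc p hp))
      (fun t' ht' => hidx t' (List.mem_cons_of_mem t ht'))
    exact ⟨Mf', ⟨hf', h1⟩, h2, h3⟩

lemma aux_window :
    ∀ (ts : List (Fin N.nt)) (k : ℕ) (M0 : N.Marking) (seq : ℕ → Fin N.nt) (M' : N.Marking),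
      N.FireSeq (N.markingAt M0 seq k) ts M' →
      (∀ j (hj : j < ts.length), seq (k + j) = ts.get ⟨j, hj⟩) →
      N.markingAt M0 seq (k + ts.length) = M' ∧
        ∀ j < ts.length, N.Firable (N.markingAt M0 seq (k + j)) (seq (k + j)) := by
  intro ts
  induction ts with
  | nil =>
    intro k M0 seq M' hseq _
    exact ⟨hseq.symm, fun j hj => absurd hj (Nat.not_lt_zero j)⟩
  | cons t ts ih =>
    intro k M0 seq M' hseq hmatch
    obtain ⟨hf, hrest⟩ := hseq
    have h0' : seq k = t := by simpa using hmatch 0 (Nat.succ_pos _)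
    have hm1 : N.markingAt M0 seq (k + 1) = N.fire (N.markingAt M0 seq k) t := by
      show N.fire (N.markingAt M0 seq k) (seq k) = _
      rw [h0']
    have hrest' : N.FireSeq (N.markingAt M0 seq (k + 1)) ts M' := by
      rw [hm1]; exact hrest
    have hmatch' : ∀ j (hj : j < ts.length), seq (k + 1 + j) = ts.get ⟨j, hj⟩ := by
      intro j hj
      have := hmatch (j + 1) (Nat.succ_lt_succ hj)
      rw [show k + (j + 1) = k + 1 + j by omega] at this
      exact this
    obtain ⟨he, hfir⟩ := ih (k + 1) M0 seq M' hrest' hmatch'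
    constructor
    · rw [show k + (t :: ts).length = k + 1 + ts.length by simp only [List.length_cons]; omega]
      exact he
    · intro j hj
      rcases Nat.eq_zero_or_pos j with rfl | hpos
      · simp only [Nat.add_zero, h0']
        exact hf
      · obtain ⟨j', rfl⟩ : ∃ j', j = j' + 1 := ⟨j - 1, by omega⟩
        have := hfir j' (by simp at hj; omega)
        rw [show k + 1 + j' = k + (j' + 1) by omega] at this
        exact this

lemma aux_prefix (M0 : N.Marking) (seq : ℕ → Fin N.nt)
    (hf : ∀ k, N.Firable (N.markingAt M0 seq k) (seq k)) :
    ∀ (d k : ℕ), N.FireSeq (N.markingAt M0 seq k)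
      ((List.range d).map fun j => seq (k + j)) (N.markingAt M0 seq (k + d)) := by
  intro d
  induction d with
  | zero =>
    intro k
    show N.markingAt M0 seq (k + 0) = N.markingAt M0 seq k
    rfl
  | succ d ih =>
    intro k
    rw [List.range_succ_eq_map, List.map_cons, List.map_map]
    have hmapeq : ((List.range d).map ((fun j => seq (k + j)) ∘ Nat.succ))
        = (List.range d).map (fun j => seq (k + 1 + j)) := by
      refine List.map_congr_left fun a _ => ?_
      show seq (k + (a + 1)) = seq (k + 1 + a)
      rw [show k + (a + 1) = k + 1 + a by omega]
    rw [hmapeq]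
    refine ⟨by simpa using hf k, ?_⟩
    have h2 := ih (k + 1)
    rw [show k + 1 + d = k + (d + 1) by omega] at h2
    exact h2

lemma aux_fire_low (hlin : IsLinearOrder (Fin N.np) le)
    (hresp : N.InhRespectsHierarchy le) (hnt : N.NoTransfer)
    {M : N.Marking} {t : Fin N.nt} (hf : N.Firable M t) (q : Fin N.np)
    (hq : N.placeIndex le q ≤ N.transIndex le t) : N.fire M t q = N.post t q := by
  haveI := hlin
  have h1 : 1 ≤ N.placeIndex le q := aux_placeIndex_pos hlin q
  have hpos : 1 ≤ N.transIndex le t := h1.trans hq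
  have hne : (Finset.univ.filter fun p => N.pre p t = Arc.inhibitor).Nonempty := by
    by_contra h
    rw [Finset.not_nonempty_iff_eq_empty] at h
    have hz : N.transIndex le t = 0 := by
      rw [SNet.transIndex, h, Finset.sup_empty]; rfl
    omega
  obtain ⟨p, hpmem, hsup⟩ := Finset.exists_mem_eq_sup _ hne (N.placeIndex le)
  have hpinh : N.pre p t = Arc.inhibitor := (Finset.mem_filter.mp hpmem).2
  have hq' : N.placeIndex le q ≤ N.placeIndex le p := by
    rw [SNet.transIndex, hsup] at hq; exact hq
  have hlq : le q p := aux_le_of_index_le hlin hq'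
  have hnotnat := hresp p t hpinh q hlq
  rw [aux_fire_apply hnt]
  rcases hpre : N.pre q t with n | _ | _ | r
  · rw [hpre] at hnotnat; simp [Arc.isNat] at hnotnat
  · have hz := hf q
    simp only [hpre] at hz ⊢
    rw [hz, Nat.zero_add]
  · simp only [hpre, Nat.zero_add]
  · exact absurd hpre (hnt q t r)

lemma aux_prepend (ts : List (Fin N.nt)) (M0 M : N.Marking)
    (h : N.FireSeq M0 ts M) (hinf : N.InfRun M) : N.InfRun M0 := by
  classical
  obtain ⟨s, hs⟩ := hinf
  set s' : ℕ → Fin N.nt :=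
    fun k => if hk : k < ts.length then ts.get ⟨k, hk⟩ else s (k - ts.length) with hs'
  have hmatch : ∀ j (hj : j < ts.length), s' (0 + j) = ts.get ⟨j, hj⟩ := by
    intro j hj
    simp only [hs', Nat.zero_add, dif_pos hj]
  have hw := aux_window ts 0 M0 s' M h hmatch
  obtain ⟨hend, hfirst⟩ := hw
  have hshift : ∀ k, N.markingAt M0 s' (ts.length + k) = N.markingAt M s k := by
    intro k
    induction k with
    | zero =>
      rw [show ts.length + 0 = 0 + ts.length by omega]
      exact hend
    | succ k ih =>
      show N.fire (N.markingAt M0 s' (ts.length + k)) (s' (ts.length + k))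
        = N.fire (N.markingAt M s k) (s k)
      rw [ih]
      congr 1
      simp only [hs', dif_neg (by omega : ¬ ts.length + k < ts.length)]
      rw [show ts.length + k - ts.length = k by omega]
  refine ⟨s', fun k => ?_⟩
  by_cases hk : k < ts.length
  · have := hfirst k hk
    rw [Nat.zero_add] at this
    exact this
  · have hk' : k = ts.length + (k - ts.length) := by omega
    rw [hk', hshift]
    have hsk : s' (ts.length + (k - ts.length)) = s (k - ts.length) := by
      simp only [hs', dif_neg (by omega : ¬ ts.length + (k - ts.length) < ts.length)]
      rw [show ts.length + (k - ts.length) - ts.length = k - ts.length by omega]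
    rw [hsk]
    exact hs (k - ts.length)

end AuxProofs

/-- a `Z_R HSA(I)` net has an infinite run from its initial
marking iff some reachable marking `M₁` admits a nonempty run `ρ` to a
marking `M₂ ≥ M₁` with `Compat_i(M₁, M₂)`, where `i` is the maximum index
of the transitions of `ρ`. -/
theorem zr_hsa_i_infinite_run_iff_subsumption (N : SNet)
    (le : Fin N.np → Fin N.np → Prop) (hlin : IsLinearOrder (Fin N.np) le)
    (hresp : N.InhRespectsHierarchy le) (hnt : N.NoTransfer) :
    N.InfRun N.init ↔
      ∃ (M₁ M₂ : N.Marking) (ρ₀ ρ : List (Fin N.nt)),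
        N.FireSeq N.init ρ₀ M₁ ∧ ρ ≠ [] ∧ N.FireSeq M₁ ρ M₂ ∧
        (∀ p, M₁ p ≤ M₂ p) ∧ N.Compat le (N.runMaxIndex le ρ) M₁ M₂ := by
  constructor
  · -- forward direction
    rintro ⟨seq, hfir⟩
    classical
    obtain ⟨t0, ht0⟩ := Finite.exists_infinite_fiber seq
    set Tinf : Finset (Fin N.nt) :=
      Finset.univ.filter (fun t => (seq ⁻¹' {t}).Infinite) with hT
    have ht0mem : t0 ∈ Tinf :=
      Finset.mem_filter.mpr ⟨Finset.mem_univ _, Set.infinite_coe_iff.mp ht0⟩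
    obtain ⟨tstar, htmem, hsup⟩ :=
      Finset.exists_mem_eq_sup Tinf ⟨t0, ht0mem⟩ (N.transIndex le)
    set i := N.transIndex le tstar with hi
    have hBfin : {k : ℕ | ¬ N.transIndex le (seq k) ≤ i}.Finite := by
      have hsub : {k : ℕ | ¬ N.transIndex le (seq k) ≤ i} ⊆
          ⋃ t ∈ (Finset.univ.filter (fun t : Fin N.nt => ¬ N.transIndex le t ≤ i)),
            seq ⁻¹' {t} := by
        intro k hk
        refine Set.mem_biUnion (Finset.mem_filter.mpr ⟨Finset.mem_univ _, hk⟩) rfl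
      refine Set.Finite.subset (Set.Finite.biUnion (Finset.finite_toSet _) ?_) hsub
      intro t ht
      rw [← Set.not_infinite]
      intro hinf
      have htT : t ∈ Tinf := Finset.mem_filter.mpr ⟨Finset.mem_univ _, hinf⟩
      have := Finset.le_sup (f := N.transIndex le) htT
      rw [hsup] at this
      exact (Finset.mem_filter.mp (Finset.mem_coe.mp ht)).2 this
    obtain ⟨K, hK⟩ := hBfin.bddAbove
    have hbound : ∀ k, K < k → N.transIndex le (seq k) ≤ i := by
      intro k hk
      by_contra h
      have : k ≤ K := hK h
      omega
    set S : Set ℕ := (seq ⁻¹' {tstar}) \ Set.Iio (K + 1) with hS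
    have hSinf : S.Infinite :=
      ((Finset.mem_filter.mp htmem).2).diff (Set.finite_Iio _)
    haveI : Infinite S := hSinf.to_subtype
    set e := Nat.orderEmbeddingOfSet S with he
    have heS : ∀ m, e m ∈ S := fun m => by
      rw [← Nat.orderEmbeddingOfSet_range S]; exact ⟨m, rfl⟩
    have hestar : ∀ m, seq (e m) = tstar := fun m => (heS m).1
    have heK : ∀ m, K < e m := fun m => by
      have := (heS m).2
      simp only [Set.mem_Iio, not_lt] at this
      omega
    set f : ℕ → N.Marking := fun m => N.markingAt N.init seq (e m + 1) with hf
    have hpwo : (Set.univ : Set (Fin N.np → ℕ)).IsPWO := by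
      have inst : ∀ _ : Fin N.np, IsWellOrder ℕ (· < ·) := fun _ => inferInstance
      simpa using Set.IsPWO.pi (fun _ : Fin N.np => (Set.IsWF.of_wellFoundedLT (Set.univ : Set ℕ)).isPWO)
    obtain ⟨a, b, hab, hfle⟩ := hpwo.exists_lt (f := f) (fun _ => Set.mem_univ _)
    have heab : e a < e b := e.strictMono hab
    have hflow : ∀ m q, N.placeIndex le q ≤ i → f m q = N.post tstar q := by
      intro m q hq
      show N.fire (N.markingAt N.init seq (e m)) (seq (e m)) q = _
      rw [hestar m]
      have hfm : N.Firable (N.markingAt N.init seq (e m)) tstar := by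
        rw [← hestar m]; exact hfir (e m)
      exact aux_fire_low hlin hresp hnt hfm q hq
    refine ⟨f a, f b, (List.range (e a + 1)).map (fun j => seq j),
      (List.range (e b - e a)).map (fun j => seq (e a + 1 + j)), ?_, ?_, ?_, ?_, ?_⟩
    · have h := aux_prefix N.init seq hfir (e a + 1) 0
      have h0 : N.markingAt N.init seq 0 = N.init := rfl
      rw [h0, Nat.zero_add] at h
      simpa using h
    · simp only [ne_eq, List.map_eq_nil_iff, List.range_eq_nil]
      omega
    · have h := aux_prefix N.init seq hfir (e b - e a) (e a + 1)
      rw [show e a + 1 + (e b - e a) = e b + 1 by omega] at h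
      exact h
    · exact fun p => hfle p
    · have hrm : N.runMaxIndex le
          ((List.range (e b - e a)).map (fun j => seq (e a + 1 + j))) ≤ i := by
        refine aux_runMax_le ?_
        intro t ht
        obtain ⟨j, hj, rfl⟩ := List.mem_map.mp ht
        have := heK a
        exact hbound _ (by omega)
      intro q hq
      rw [hflow a q (hq.trans hrm), hflow b q (hq.trans hrm)]
  · -- backward direction
    rintro ⟨M₁, M₂, ρ₀, ρ, h0, hne, hρ, hle12, hc⟩
    set i := N.runMaxIndex le ρ with hi
    have hlen : 0 < ρ.length := List.length_pos_iff.mpr hne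
    have hidx : ∀ t ∈ ρ, N.transIndex le t ≤ i := fun t ht => aux_le_runMax ht
    refine aux_prepend ρ₀ N.init M₁ h0 ?_
    set len := ρ.length with hlenEq
    have hmod : ∀ k : ℕ, k % len < len := fun k => Nat.mod_lt _ hlen
    set s : ℕ → Fin N.nt := fun k => ρ.get ⟨k % len, hmod k⟩ with hs
    have hmatch : ∀ q j (hj : j < ρ.length), s (q * len + j) = ρ.get ⟨j, hj⟩ := by
      intro q j hj
      have hmodeq : (q * len + j) % len = j := by
        rw [Nat.mul_comm, Nat.mul_add_mod]
        exact Nat.mod_eq_of_lt hj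
      simp only [hs]
      congr 1
      exact Fin.ext hmodeq
    have step : ∀ q, (∀ p, M₁ p ≤ N.markingAt M₁ s (q * len) p) →
        N.Compat le i M₁ (N.markingAt M₁ s (q * len)) →
        ((∀ p, M₁ p ≤ N.markingAt M₁ s ((q + 1) * len) p) ∧
          N.Compat le i M₁ (N.markingAt M₁ s ((q + 1) * len)) ∧
          ∀ j < len, N.Firable (N.markingAt M₁ s (q * len + j)) (s (q * len + j))) := by
      intro q hle1 hc1
      obtain ⟨Mf', hseq', hle', hc'⟩ :=
        aux_dominate hlin hnt i ρ M₁ (N.markingAt M₁ s (q * len)) M₂ hρ hle1 hc1 hidx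
      obtain ⟨hend, hfirB⟩ := aux_window ρ (q * len) M₁ s Mf' hseq' (hmatch q)
      have hend' : N.markingAt M₁ s ((q + 1) * len) = Mf' := by
        rw [show (q + 1) * len = q * len + len by ring]
        exact hend
      refine ⟨?_, ?_, hfirB⟩
      · intro p
        rw [hend']
        exact (hle12 p).trans (hle' p)
      · rw [hend']
        intro p hp
        rw [hc p hp]
        exact hc' p hp
    have blocks : ∀ q, (∀ p, M₁ p ≤ N.markingAt M₁ s (q * len) p) ∧
        N.Compat le i M₁ (N.markingAt M₁ s (q * len)) := by
      intro q
      induction q with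
      | zero =>
        rw [Nat.zero_mul]
        exact ⟨fun p => le_rfl, fun p _ => rfl⟩
      | succ q ih =>
        have := step q ih.1 ih.2
        exact ⟨this.1, this.2.1⟩
    refine ⟨s, fun k => ?_⟩
    have hk := (step (k / len) (blocks _).1 (blocks _).2).2.2 (k % len) (hmod k)
    rw [show k / len * len + k % len = k by
      rw [Nat.mul_comm]; exact Nat.div_add_mod k len] at hk
    exact hk
end

section
/- Let N be a net in Z_R HSA(I), let M₁ and M₂ be markings with M₁ ≤ M₂ componentwise, and let i ∈ ℕ be such that Compat_i(M₁, M₂) holds. Then for any finite sequence ρ of transitions all of Index at most i: if ρ can be fired from M₁ reaching a marking M₁', then ρ can be fired from M₂ reaching a marking M₂' with M₁' ≤ M₂' componentwise and Compat_i(M₁', M₂'). -/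
/-- in a `Z_R HSA(I)` net, if `M₁ ≤ M₂` and `Compat_i(M₁, M₂)`,
then any run over transitions of index at most `i` firable from `M₁` is also
firable from `M₂`, and the resulting markings again satisfy `≤` and
`Compat_i`. -/
theorem zr_hsa_i_compat_monotone (N : SNet)
    (le : Fin N.np → Fin N.np → Prop) (hlin : IsLinearOrder (Fin N.np) le)
    (hresp : N.InhRespectsHierarchy le) (hnt : N.NoTransfer)
    (M₁ M₂ : N.Marking) (hle : ∀ p, M₁ p ≤ M₂ p) (i : ℕ)
    (hcompat : N.Compat le i M₁ M₂) (ρ : List (Fin N.nt))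
    (hρ : ∀ t ∈ ρ, N.transIndex le t ≤ i)
    (M₁' : N.Marking) (h₁ : N.FireSeq M₁ ρ M₁') :
    ∃ M₂' : N.Marking, N.FireSeq M₂ ρ M₂' ∧ (∀ p, M₁' p ≤ M₂' p) ∧
      N.Compat le i M₁' M₂' := by
  induction ρ generalizing M₁ M₂ with
  | nil =>
    refine ⟨M₂, rfl, ?_, ?_⟩
    · cases h₁; exact hle
    · cases h₁; exact hcompat
  | cons t ts ih =>
    obtain ⟨hfir, hseq⟩ := h₁
    have hti : N.transIndex le t ≤ i := hρ t List.mem_cons_self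
    have hfir2 : N.Firable M₂ t := by
      intro p
      have h := hfir p
      cases hpre : N.pre p t with
      | weight n => simp only [hpre] at h ⊢; exact le_trans h (hle p)
      | inhibitor =>
        simp only [hpre] at h ⊢
        have hidx : N.placeIndex le p ≤ i := by
          refine le_trans ?_ hti
          exact Finset.le_sup (f := N.placeIndex le)
            (Finset.mem_filter.mpr ⟨Finset.mem_univ p, hpre⟩)
        rw [← hcompat p hidx]; exact h
      | reset => simp [hpre]
      | transfer p' => exact absurd hpre (hnt p t p')
    have hsum : ∀ (M : N.Marking) p,
        (∑ q : Fin N.np, if N.pre q t = Arc.transfer p then M q else 0) = 0 := by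
      intro M p
      refine Finset.sum_eq_zero fun q _ => ?_
      simp [hnt q t p]
    have hle' : ∀ p, N.fire M₁ t p ≤ N.fire M₂ t p := by
      intro p
      unfold SNet.fire
      rw [hsum M₁ p, hsum M₂ p]
      cases hpre : N.pre p t with
      | weight n => simp only; exact Nat.add_le_add_right (Nat.add_le_add_right (Nat.sub_le_sub_right (hle p) n) 0) _
      | inhibitor => simp only; exact Nat.add_le_add_right (Nat.add_le_add_right (hle p) 0) _
      | reset => exact le_refl _
      | transfer p' => exact absurd hpre (hnt p t p')
    have hcompat' : N.Compat le i (N.fire M₁ t) (N.fire M₂ t) := by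
      intro p hidx
      unfold SNet.fire
      rw [hsum M₁ p, hsum M₂ p, hcompat p hidx]
    exact match ih (N.fire M₁ t) (N.fire M₂ t) hle' hcompat'
        (fun t' ht' => hρ t' (List.mem_cons_of_mem t ht')) hseq with
      | ⟨M₂', h1, h2, h3⟩ => ⟨M₂', ⟨hfir2, h1⟩, h2, h3⟩
end
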